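/- Let L ≥ 3 be an integer, λ > 0, and y* the threshold as above. If y > y', where both y, y' > y*, then the larger positive root of f(x;y) = x^{2L-1} - √λ·y·x^{L-1} + λ·x = 0 is strictly greater than the larger positive root of f(x;y') = 0, and the smaller positive root of f(·;y) is strictly less than the smaller positive root of f(·;y'). -/

import Mathlib

private noncomputable def Sgeo (k : ℕ) (x y : ℝ) : ℝ :=
  ∑ i ∈ Finset.range k, x ^ i * y ^ (k - 1 - i)

private lemma Sgeo_mul (k : ℕ) (x y : ℝ) : Sgeo k x y * (x - y) = x ^ k - y ^ k :=
  geom_sum₂_mul x y k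

private lemma Sgeo_comm (k : ℕ) (x y : ℝ) : Sgeo k x y = Sgeo k y x := by
  unfold Sgeo
  rw [← Finset.sum_range_reflect]
  apply Finset.sum_congr rfl
  intro i hi
  simp only [Finset.mem_range] at hi
  have h1 : k - 1 - (k - 1 - i) = i := by omega
  rw [h1, mul_comm]

private lemma Sgeo_pos {k : ℕ} (hk : 0 < k) {x y : ℝ} (hx : 0 < x) (hy : 0 < y) :
    0 < Sgeo k x y := by
  unfold Sgeo
  apply Finset.sum_pos
  · intro i _
    exact mul_pos (pow_pos hx _) (pow_pos hy _)
  · exact ⟨0, Finset.mem_range.mpr hk⟩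

private lemma pow_cross {w v : ℝ} (hw : 0 < w) (hwv : w ≤ v) {p q : ℕ} (hqp : q ≤ p) :
    w ^ p * v ^ q ≤ v ^ p * w ^ q := by
  have hv : 0 < v := hw.trans_le hwv
  obtain ⟨d, rfl⟩ : ∃ d, p = q + d := ⟨p - q, by omega⟩
  rw [pow_add, pow_add]
  have h1 : w ^ d ≤ v ^ d := pow_le_pow_left₀ hw.le hwv d
  nlinarith [mul_le_mul_of_nonneg_left h1 (mul_pos (pow_pos hw q) (pow_pos hv q)).le]

private lemma lemA (m : ℕ) {u w v : ℝ} (hu : 0 < u) (hw : 0 < w) (hwv : w ≤ v) :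
    w ^ m * Sgeo (m + 2) w u * Sgeo m v u ≤ v ^ m * Sgeo (m + 2) v u * Sgeo m w u := by
  have hv : 0 < v := hw.trans_le hwv
  have expand : ∀ x z : ℝ, x ^ m * Sgeo (m + 2) x u * Sgeo m z u
      = ∑ i ∈ Finset.range (m + 2), ∑ j ∈ Finset.range m,
          x ^ (m + i) * z ^ j * (u ^ (m + 2 - 1 - i) * u ^ (m - 1 - j)) := by
    intro x z
    unfold Sgeo
    rw [mul_assoc, Finset.sum_mul_sum, Finset.mul_sum]
    apply Finset.sum_congr rfl
    intro i _
    rw [Finset.mul_sum]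
    apply Finset.sum_congr rfl
    intro j _
    rw [pow_add]
    ring
  rw [expand w v, expand v w]
  apply Finset.sum_le_sum
  intro i _
  apply Finset.sum_le_sum
  intro j hj
  simp only [Finset.mem_range] at hj
  have hqp : j ≤ m + i := by omega
  exact mul_le_mul_of_nonneg_right (pow_cross hw hwv hqp)
    (mul_pos (pow_pos hu _) (pow_pos hu _)).le

set_option maxHeartbeats 1600000 in
theorem stmt_6 (L : ℕ) (hL : 3 ≤ L) (lam y y' a1 a2 b1 b2 : ℝ) (hlam : 0 < lam)
    (hy' : ((((L : ℝ) - 2) / L) ^ ((L : ℝ) / (2 * (L : ℝ) - 2))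
        + ((L : ℝ) / ((L : ℝ) - 2)) ^ (((L : ℝ) - 2) / (2 * (L : ℝ) - 2)))
        * lam ^ ((1 : ℝ) / (2 * (L : ℝ) - 2)) < y')
    (hyy' : y' < y)
    (ha2 : 0 < a2) (ha12 : a2 < a1)
    (ha1eq : a1 ^ (2 * L - 1) - Real.sqrt lam * y * a1 ^ (L - 1) + lam * a1 = 0)
    (ha2eq : a2 ^ (2 * L - 1) - Real.sqrt lam * y * a2 ^ (L - 1) + lam * a2 = 0)
    (hb2 : 0 < b2) (hb12 : b2 < b1)
    (hb1eq : b1 ^ (2 * L - 1) - Real.sqrt lam * y' * b1 ^ (L - 1) + lam * b1 = 0)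
    (hb2eq : b2 ^ (2 * L - 1) - Real.sqrt lam * y' * b2 ^ (L - 1) + lam * b2 = 0) :
    b1 < a1 ∧ a2 < b2 := by
  clear hy'
  obtain ⟨m, rfl⟩ : ∃ m, L = m + 2 := ⟨L - 2, by omega⟩
  have hm : 0 < m := by omega
  have e1 : 2 * (m + 2) - 1 = 2 * m + 3 := by omega
  have e2 : m + 2 - 1 = m + 1 := by omega
  rw [e1, e2] at ha1eq ha2eq hb1eq hb2eq
  have ha1 : 0 < a1 := ha2.trans ha12
  have hb1 : 0 < b1 := hb2.trans hb12
  set c : ℝ := Real.sqrt lam * y with hc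
  set c' : ℝ := Real.sqrt lam * y' with hc'
  have hcc : c' < c := by
    have := Real.sqrt_pos.mpr hlam
    exact mul_lt_mul_of_pos_left hyy' this
  have key : ∀ x e : ℝ, 0 < x → x ^ (2 * m + 3) - e * x ^ (m + 1) + lam * x = 0 →
      x ^ (2 * m + 2) + lam = e * x ^ m := by
    intro x e hx heq
    have h0 : x * (x ^ (2 * m + 2) + lam - e * x ^ m) = 0 := by linear_combination heq
    rcases mul_eq_zero.mp h0 with h | h
    · exact absurd h hx.ne'
    · linarith
  have ga1 := key a1 c ha1 ha1eq
  have ga2 := key a2 c ha2 ha2eq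
  have gb1 := key b1 c' hb1 hb1eq
  have gb2 := key b2 c' hb2 hb2eq
  -- identity (I)
  have hI : lam * Sgeo m a1 a2 = (a1 * a2) ^ m * Sgeo (m + 2) a1 a2 := by
    have gA := Sgeo_mul (m + 2) a1 a2
    have gB := Sgeo_mul m a1 a2
    have hsub : a1 - a2 ≠ 0 := sub_ne_zero.mpr ha12.ne'
    apply mul_right_cancel₀ hsub
    have hcomb : a2 ^ m * (a1 ^ (2 * m + 2) + lam) - a1 ^ m * (a2 ^ (2 * m + 2) + lam)
        = a2 ^ m * (c * a1 ^ m) - a1 ^ m * (c * a2 ^ m) := by rw [ga1, ga2]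
    have hcomb2 : lam * (a1 ^ m - a2 ^ m) = (a1 * a2) ^ m * (a1 ^ (m + 2) - a2 ^ (m + 2)) := by
      linear_combination (-1 : ℝ) * hcomb
    rw [mul_assoc, gB, mul_assoc, gA]
    linarith [hcomb2]
  have hSma : 0 < Sgeo m a1 a2 := Sgeo_pos hm ha1 ha2
  constructor
  · -- b1 < a1
    by_contra hcon
    push_neg at hcon  -- a1 ≤ b1
    have hA := lemA m ha2 ha1 hcon
    have h2 := mul_le_mul_of_nonneg_left hA (pow_pos ha2 m).le
    have hI' : lam * Sgeo m a1 a2 = a1 ^ m * a2 ^ m * Sgeo (m + 2) a1 a2 := by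
      rw [← mul_pow]; exact hI
    have h3 : lam * Sgeo m b1 a2 * Sgeo m a1 a2
        ≤ (a2 * b1) ^ m * Sgeo (m + 2) b1 a2 * Sgeo m a1 a2 := by
      calc lam * Sgeo m b1 a2 * Sgeo m a1 a2
          = lam * Sgeo m a1 a2 * Sgeo m b1 a2 := by ring
        _ = a1 ^ m * a2 ^ m * Sgeo (m + 2) a1 a2 * Sgeo m b1 a2 := by rw [hI']
        _ = a2 ^ m * (a1 ^ m * Sgeo (m + 2) a1 a2 * Sgeo m b1 a2) := by ring
        _ ≤ a2 ^ m * (b1 ^ m * Sgeo (m + 2) b1 a2 * Sgeo m a1 a2) := h2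
        _ = (a2 * b1) ^ m * Sgeo (m + 2) b1 a2 * Sgeo m a1 a2 := by rw [mul_pow]; ring
    have hII : lam * Sgeo m b1 a2 ≤ (a2 * b1) ^ m * Sgeo (m + 2) b1 a2 :=
      le_of_mul_le_mul_right h3 hSma
    have hba : (0:ℝ) < b1 - a2 := by linarith
    have h4 := mul_le_mul_of_nonneg_right hII hba.le
    have hkey : (b1 ^ (2 * m + 2) + lam) * a2 ^ m - (a2 ^ (2 * m + 2) + lam) * b1 ^ m
        = (a2 * b1) ^ m * Sgeo (m + 2) b1 a2 * (b1 - a2) - lam * Sgeo m b1 a2 * (b1 - a2) := by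
      rw [mul_assoc ((a2 * b1) ^ m), Sgeo_mul, mul_assoc lam, Sgeo_mul]; ring
    have hge : (a2 ^ (2 * m + 2) + lam) * b1 ^ m ≤ (b1 ^ (2 * m + 2) + lam) * a2 ^ m := by
      nlinarith [h4, hkey]
    rw [ga2, gb1] at hge
    have hpos : 0 < a2 ^ m * b1 ^ m := mul_pos (pow_pos ha2 m) (pow_pos hb1 m)
    have h5 : c * (a2 ^ m * b1 ^ m) ≤ c' * (a2 ^ m * b1 ^ m) := by
      calc c * (a2 ^ m * b1 ^ m) = c * a2 ^ m * b1 ^ m := by ring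
        _ ≤ c' * b1 ^ m * a2 ^ m := hge
        _ = c' * (a2 ^ m * b1 ^ m) := by ring
    exact absurd ((mul_le_mul_iff_of_pos_right hpos).mp h5) (not_le.mpr hcc)
  · -- a2 < b2
    by_contra hcon
    push_neg at hcon  -- b2 ≤ a2
    have hA := lemA m ha1 hb2 hcon
    have h2 := mul_le_mul_of_nonneg_left hA (pow_pos ha1 m).le
    have hIc : lam * Sgeo m a2 a1 = (a1 * a2) ^ m * Sgeo (m + 2) a2 a1 := by
      rw [Sgeo_comm m a2 a1, Sgeo_comm (m + 2) a2 a1]; exact hI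
    have hIc' : lam * Sgeo m a2 a1 = a1 ^ m * a2 ^ m * Sgeo (m + 2) a2 a1 := by
      rw [← mul_pow]; exact hIc
    have h3 : (a1 * b2) ^ m * Sgeo (m + 2) b2 a1 * Sgeo m a2 a1
        ≤ lam * Sgeo m b2 a1 * Sgeo m a2 a1 := by
      calc (a1 * b2) ^ m * Sgeo (m + 2) b2 a1 * Sgeo m a2 a1
          = a1 ^ m * (b2 ^ m * Sgeo (m + 2) b2 a1 * Sgeo m a2 a1) := by rw [mul_pow]; ring
        _ ≤ a1 ^ m * (a2 ^ m * Sgeo (m + 2) a2 a1 * Sgeo m b2 a1) := h2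
        _ = a1 ^ m * a2 ^ m * Sgeo (m + 2) a2 a1 * Sgeo m b2 a1 := by ring
        _ = lam * Sgeo m a2 a1 * Sgeo m b2 a1 := by rw [hIc']
        _ = lam * Sgeo m b2 a1 * Sgeo m a2 a1 := by ring
    have hSma' : 0 < Sgeo m a2 a1 := Sgeo_pos hm ha2 ha1
    have hII : (a1 * b2) ^ m * Sgeo (m + 2) b2 a1 ≤ lam * Sgeo m b2 a1 :=
      le_of_mul_le_mul_right h3 hSma'
    have hab : (0:ℝ) < a1 - b2 := by linarith
    have h4 := mul_le_mul_of_nonneg_right hII hab.le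
    have hs1 : Sgeo (m + 2) b2 a1 = Sgeo (m + 2) a1 b2 := Sgeo_comm _ _ _
    have hs2 : Sgeo m b2 a1 = Sgeo m a1 b2 := Sgeo_comm _ _ _
    rw [hs1, hs2] at h4
    have hkey : (a1 ^ (2 * m + 2) + lam) * b2 ^ m - (b2 ^ (2 * m + 2) + lam) * a1 ^ m
        = (a1 * b2) ^ m * Sgeo (m + 2) a1 b2 * (a1 - b2) - lam * Sgeo m a1 b2 * (a1 - b2) := by
      rw [mul_assoc ((a1 * b2) ^ m), Sgeo_mul, mul_assoc lam, Sgeo_mul]; ring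
    have hle : (a1 ^ (2 * m + 2) + lam) * b2 ^ m ≤ (b2 ^ (2 * m + 2) + lam) * a1 ^ m := by
      nlinarith [h4, hkey]
    rw [ga1, gb2] at hle
    have hpos : 0 < a1 ^ m * b2 ^ m := mul_pos (pow_pos ha1 m) (pow_pos hb2 m)
    have h5 : c * (a1 ^ m * b2 ^ m) ≤ c' * (a1 ^ m * b2 ^ m) := by
      calc c * (a1 ^ m * b2 ^ m) = c * a1 ^ m * b2 ^ m := by ring
        _ ≤ c' * b2 ^ m * a1 ^ m := hle
        _ = c' * (a1 ^ m * b2 ^ m) := by ring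
    exact absurd ((mul_le_mul_iff_of_pos_right hpos).mp h5) (not_le.mpr hcc)
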